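/- arXiv:1605.04851 — 2 statements merged into one kernel-verified Lean document; each statement's English description precedes it below -/
import Mathlib

section
/- For every γ > 0 and every pair (E₁,E₂) ∈ R_FD ∪ ([0,E₁(γ)] × [0,E₂(γ)]), the pair (E₁,E₂) is achievable by γ-almost-fixed-length tests. -/
open Real Filter Finset MeasureTheory
open scoped Classical

variable {𝒳 : Type*} [Fintype 𝒳] [DecidableEq 𝒳] [Nonempty 𝒳]

/-- Kullback–Leibler divergence `D(Q‖P)` between pmfs on a finite alphabet. -/
noncomputable def kl (Q P : 𝒳 → ℝ) : ℝ :=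
  ∑ x, Q x * Real.log (Q x / P x)

/-- The `λ`-tilted distribution `P^(λ)` of `P₁` and `P₂`. -/
noncomputable def tilt (P₁ P₂ : 𝒳 → ℝ) (l : ℝ) : 𝒳 → ℝ :=
  fun x => P₁ x ^ (1 - l) * P₂ x ^ l / ∑ a, P₁ a ^ (1 - l) * P₂ a ^ l

/-- Probability of a set of length-`N` sample paths under i.i.d. sampling from `P`. -/
noncomputable def prodProb (P : 𝒳 → ℝ) {N : ℕ} (S : Set (Fin N → 𝒳)) : ℝ :=
  ∑ ω : Fin N → 𝒳, S.indicator (fun ω' => ∏ i, P (ω' i)) ω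

/-- The fixed-length error-exponent region `R_FD`. -/
def RFD (P₁ P₂ : 𝒳 → ℝ) : Set (ℝ × ℝ) :=
  {p | 0 ≤ p.1 ∧ 0 ≤ p.2 ∧
    ∃ l ∈ Set.Icc (0:ℝ) 1,
      p.1 ≤ kl (tilt P₁ P₂ l) P₁ ∧ p.2 ≤ kl (tilt P₁ P₂ l) P₂}

/-- `E₁(γ) = max{D(P^(λ)‖P₁) : λ ∈ [0,1], D(P^(λ)‖P₂) ≥ γ}` (sup of the empty set is 0). -/
noncomputable def E1exp (P₁ P₂ : 𝒳 → ℝ) (γ : ℝ) : ℝ :=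
  sSup {E | ∃ l ∈ Set.Icc (0:ℝ) 1, γ ≤ kl (tilt P₁ P₂ l) P₂ ∧ E = kl (tilt P₁ P₂ l) P₁}

/-- `E₂(γ) = max{D(P^(λ)‖P₂) : λ ∈ [0,1], D(P^(λ)‖P₁) ≥ γ}` (sup of the empty set is 0). -/
noncomputable def E2exp (P₁ P₂ : 𝒳 → ℝ) (γ : ℝ) : ℝ :=
  sSup {E | ∃ l ∈ Set.Icc (0:ℝ) 1, γ ≤ kl (tilt P₁ P₂ l) P₁ ∧ E = kl (tilt P₁ P₂ l) P₂}

/-- A sequential hypothesis test whose stopping time is bounded by `N`: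
a stopping time `τ` for the coordinate filtration, together with decision events
`A1`, `A2` that are determined by the samples observed up to time `τ`,
are disjoint, and exhaust the sample space. -/
structure HypTest (𝒳 : Type*) (N : ℕ) where
  τ : (Fin N → 𝒳) → ℕ
  A1 : Set (Fin N → 𝒳)
  A2 : Set (Fin N → 𝒳)
  tau_le : ∀ ω, τ ω ≤ N
  stopping : ∀ ω ω', (∀ i : Fin N, (i : ℕ) < τ ω → ω i = ω' i) → τ ω' = τ ω
  adapted1 : ∀ ω ω', (∀ i : Fin N, (i : ℕ) < τ ω → ω i = ω' i) → (ω ∈ A1 ↔ ω' ∈ A1)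
  adapted2 : ∀ ω ω', (∀ i : Fin N, (i : ℕ) < τ ω → ω i = ω' i) → (ω ∈ A2 ↔ ω' ∈ A2)
  disj : Disjoint A1 A2
  exhaust : A1 ∪ A2 = Set.univ

/-- `(E₁, E₂)` is achievable by `γ`-almost-fixed-length tests. -/
def AFLAchievable (P₁ P₂ : 𝒳 → ℝ) (γ E₁ E₂ : ℝ) : Prop :=
  0 ≤ E₁ ∧ 0 ≤ E₂ ∧
  ∃ c : ℝ, 0 < c ∧ ∃ l : ℕ, 0 < l ∧
    ∀ δ : ℝ, 0 < δ → ∃ n₀ : ℕ, ∀ n : ℕ, n₀ ≤ n →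
      ∃ N : ℕ, (N : ℝ) ≤ c * (n : ℝ) ^ l ∧
        ∃ T : HypTest 𝒳 N,
          prodProb P₁ {ω | n < T.τ ω} ≤ Real.exp (-(γ * n)) ∧
          prodProb P₂ {ω | n < T.τ ω} ≤ Real.exp (-(γ * n)) ∧
          prodProb P₁ T.A2 ≤ Real.exp (-((E₁ - δ) * n)) ∧
          prodProb P₂ T.A1 ≤ Real.exp (-((E₂ - δ) * n))

/-- `(E₁, E₂, E_Ω)` is achievable by fixed-length tests with a rejection option. -/
def RejAchievable (P₁ P₂ : 𝒳 → ℝ) (E₁ E₂ EΩ : ℝ) : Prop :=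
  0 ≤ E₁ ∧ 0 ≤ E₂ ∧ 0 ≤ EΩ ∧
  ∀ δ : ℝ, 0 < δ → ∃ n₀ : ℕ, ∀ n : ℕ, n₀ ≤ n →
    ∃ A1 A2 AΩ : Set (Fin n → 𝒳),
      Disjoint A1 A2 ∧ Disjoint A1 AΩ ∧ Disjoint A2 AΩ ∧ A1 ∪ A2 ∪ AΩ = Set.univ ∧
      prodProb P₁ A2 ≤ Real.exp (-((E₁ - δ) * n)) ∧
      prodProb P₂ A1 ≤ Real.exp (-((E₂ - δ) * n)) ∧
      prodProb P₁ AΩ + prodProb P₂ AΩ ≤ Real.exp (-((EΩ - δ) * n))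

/-- Sum of the log-likelihood ratios of the first `n` samples. -/
noncomputable def S1 (P₁ P₂ : 𝒳 → ℝ) (n : ℕ) {N : ℕ} (ω : Fin N → 𝒳) : ℝ :=
  ∑ i ∈ Finset.univ.filter (fun i : Fin N => (i : ℕ) < n),
    Real.log (P₁ (ω i) / P₂ (ω i))

/-- Sum of the log-likelihood ratios of the samples after time `n`. -/
noncomputable def S2 (P₁ P₂ : 𝒳 → ℝ) (n : ℕ) {N : ℕ} (ω : Fin N → 𝒳) : ℝ :=
  ∑ i ∈ Finset.univ.filter (fun i : Fin N => n ≤ (i : ℕ)),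
    Real.log (P₁ (ω i) / P₂ (ω i))

/-- Event that the two-phase test (phase-one thresholds `α₁ > β₁`, phase-two threshold `α`)
chooses `H₁`. -/
def twoPhaseA1 (P₁ P₂ : 𝒳 → ℝ) (k n : ℕ) (α₁ β₁ α : ℝ) : Set (Fin ((k + 1) * n) → 𝒳) :=
  {ω | α₁ ≤ S1 P₁ P₂ n ω / n ∨
    (β₁ < S1 P₁ P₂ n ω / n ∧ S1 P₁ P₂ n ω / n < α₁ ∧ α ≤ S2 P₁ P₂ n ω / (k * n))}

/-- Event that the two-phase test chooses `H₂`. -/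
def twoPhaseA2 (P₁ P₂ : 𝒳 → ℝ) (k n : ℕ) (α₁ β₁ α : ℝ) : Set (Fin ((k + 1) * n) → 𝒳) :=
  {ω | S1 P₁ P₂ n ω / n ≤ β₁ ∨
    (β₁ < S1 P₁ P₂ n ω / n ∧ S1 P₁ P₂ n ω / n < α₁ ∧ S2 P₁ P₂ n ω / (k * n) < α)}

/-- Stopping time of the two-phase test: `n` if phase one is decisive, `(k+1)n` otherwise. -/
noncomputable def twoPhaseTau (P₁ P₂ : 𝒳 → ℝ) (k n : ℕ) (α₁ β₁ : ℝ)
    (ω : Fin ((k + 1) * n) → 𝒳) : ℕ :=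
  if β₁ < S1 P₁ P₂ n ω / n ∧ S1 P₁ P₂ n ω / n < α₁ then (k + 1) * n else n

set_option linter.unusedSectionVars false
section Aux

/-- log-likelihood ratio of a single sample -/
noncomputable def LLx (P₁ P₂ : 𝒳 → ℝ) (x : 𝒳) : ℝ := Real.log (P₁ x / P₂ x)

/-- normalizing constant of the tilted distribution -/
noncomputable def Zf (P₁ P₂ : 𝒳 → ℝ) (l : ℝ) : ℝ := ∑ a, P₁ a ^ (1 - l) * P₂ a ^ l

/-- mean of the log-likelihood ratio under the tilted distribution -/
noncomputable def thf (P₁ P₂ : 𝒳 → ℝ) (l : ℝ) : ℝ := ∑ x, tilt P₁ P₂ l x * LLx P₁ P₂ x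

variable {P₁ P₂ : 𝒳 → ℝ}

lemma Zf_pos (h1 : ∀ x, 0 < P₁ x) (h2 : ∀ x, 0 < P₂ x) (l : ℝ) : 0 < Zf P₁ P₂ l :=
  Finset.sum_pos (fun x _ => mul_pos (Real.rpow_pos_of_pos (h1 x) _)
    (Real.rpow_pos_of_pos (h2 x) _)) Finset.univ_nonempty

lemma tilt_pos (h1 : ∀ x, 0 < P₁ x) (h2 : ∀ x, 0 < P₂ x) (l : ℝ) (x : 𝒳) :
    0 < tilt P₁ P₂ l x :=
  div_pos (mul_pos (Real.rpow_pos_of_pos (h1 x) _) (Real.rpow_pos_of_pos (h2 x) _))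
    (Zf_pos h1 h2 l)

lemma tilt_sum (h1 : ∀ x, 0 < P₁ x) (h2 : ∀ x, 0 < P₂ x) (l : ℝ) :
    ∑ x, tilt P₁ P₂ l x = 1 := by
  have hZ : (Zf P₁ P₂ l) ≠ 0 := (Zf_pos h1 h2 l).ne'
  simp only [tilt, ← Finset.sum_div]
  exact div_self hZ

lemma log_tilt₁ (h1 : ∀ x, 0 < P₁ x) (h2 : ∀ x, 0 < P₂ x) (l : ℝ) (x : 𝒳) :
    Real.log (tilt P₁ P₂ l x / P₁ x) = -(l * LLx P₁ P₂ x) - Real.log (Zf P₁ P₂ l) := by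
  have hP1 := h1 x
  have hP2 := h2 x
  have hZ : (0:ℝ) < ∑ a, P₁ a ^ (1 - l) * P₂ a ^ l := Zf_pos h1 h2 l
  have hnum : (0:ℝ) < P₁ x ^ (1 - l) * P₂ x ^ l :=
    mul_pos (Real.rpow_pos_of_pos hP1 _) (Real.rpow_pos_of_pos hP2 _)
  simp only [tilt, LLx, Zf]
  rw [div_div, Real.log_div hnum.ne' (mul_pos hZ hP1).ne',
    Real.log_mul (Real.rpow_pos_of_pos hP1 _).ne' (Real.rpow_pos_of_pos hP2 _).ne',
    Real.log_mul hZ.ne' hP1.ne', Real.log_rpow hP1, Real.log_rpow hP2,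
    Real.log_div hP1.ne' hP2.ne']
  ring

lemma log_tilt₂ (h1 : ∀ x, 0 < P₁ x) (h2 : ∀ x, 0 < P₂ x) (l : ℝ) (x : 𝒳) :
    Real.log (tilt P₁ P₂ l x / P₂ x) = (1 - l) * LLx P₁ P₂ x - Real.log (Zf P₁ P₂ l) := by
  have hP1 := h1 x
  have hP2 := h2 x
  have hZ : (0:ℝ) < ∑ a, P₁ a ^ (1 - l) * P₂ a ^ l := Zf_pos h1 h2 l
  have hnum : (0:ℝ) < P₁ x ^ (1 - l) * P₂ x ^ l :=
    mul_pos (Real.rpow_pos_of_pos hP1 _) (Real.rpow_pos_of_pos hP2 _)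
  simp only [tilt, LLx, Zf]
  rw [div_div, Real.log_div hnum.ne' (mul_pos hZ hP2).ne',
    Real.log_mul (Real.rpow_pos_of_pos hP1 _).ne' (Real.rpow_pos_of_pos hP2 _).ne',
    Real.log_mul hZ.ne' hP2.ne', Real.log_rpow hP1, Real.log_rpow hP2,
    Real.log_div hP1.ne' hP2.ne']
  ring

lemma kl_tilt₁ (h1 : ∀ x, 0 < P₁ x) (h2 : ∀ x, 0 < P₂ x) (l : ℝ) :
    kl (tilt P₁ P₂ l) P₁ = -(l * thf P₁ P₂ l) - Real.log (Zf P₁ P₂ l) := by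
  have key : ∀ x : 𝒳, tilt P₁ P₂ l x * Real.log (tilt P₁ P₂ l x / P₁ x)
      = -(l * (tilt P₁ P₂ l x * LLx P₁ P₂ x)) - tilt P₁ P₂ l x * Real.log (Zf P₁ P₂ l) := by
    intro x; rw [log_tilt₁ h1 h2 l x]; ring
  calc kl (tilt P₁ P₂ l) P₁
      = ∑ x, (-(l * (tilt P₁ P₂ l x * LLx P₁ P₂ x)) - tilt P₁ P₂ l x * Real.log (Zf P₁ P₂ l)) :=
        Finset.sum_congr rfl fun x _ => key x
    _ = -(l * ∑ x, tilt P₁ P₂ l x * LLx P₁ P₂ x)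
        - (∑ x, tilt P₁ P₂ l x) * Real.log (Zf P₁ P₂ l) := by
        rw [Finset.sum_sub_distrib, Finset.sum_neg_distrib, ← Finset.mul_sum, ← Finset.sum_mul]
    _ = -(l * thf P₁ P₂ l) - Real.log (Zf P₁ P₂ l) := by
        rw [tilt_sum h1 h2 l, one_mul]; rfl

lemma kl_tilt₂ (h1 : ∀ x, 0 < P₁ x) (h2 : ∀ x, 0 < P₂ x) (l : ℝ) :
    kl (tilt P₁ P₂ l) P₂ = (1 - l) * thf P₁ P₂ l - Real.log (Zf P₁ P₂ l) := by
  have key : ∀ x : 𝒳, tilt P₁ P₂ l x * Real.log (tilt P₁ P₂ l x / P₂ x)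
      = (1 - l) * (tilt P₁ P₂ l x * LLx P₁ P₂ x) - tilt P₁ P₂ l x * Real.log (Zf P₁ P₂ l) := by
    intro x; rw [log_tilt₂ h1 h2 l x]; ring
  calc kl (tilt P₁ P₂ l) P₂
      = ∑ x, ((1 - l) * (tilt P₁ P₂ l x * LLx P₁ P₂ x)
          - tilt P₁ P₂ l x * Real.log (Zf P₁ P₂ l)) :=
        Finset.sum_congr rfl fun x _ => key x
    _ = (1 - l) * (∑ x, tilt P₁ P₂ l x * LLx P₁ P₂ x)
        - (∑ x, tilt P₁ P₂ l x) * Real.log (Zf P₁ P₂ l) := by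
        rw [Finset.sum_sub_distrib, ← Finset.mul_sum, ← Finset.sum_mul]
    _ = (1 - l) * thf P₁ P₂ l - Real.log (Zf P₁ P₂ l) := by
        rw [tilt_sum h1 h2 l, one_mul]; rfl

lemma mgf₂ (h1 : ∀ x, 0 < P₁ x) (h2 : ∀ x, 0 < P₂ x) (l : ℝ) :
    ∑ x, P₂ x * Real.exp ((1 - l) * LLx P₁ P₂ x) = Zf P₁ P₂ l := by
  refine Finset.sum_congr rfl fun x _ => ?_
  have hP1 := h1 x
  have hP2 := h2 x
  have hexp : Real.exp ((1 - l) * LLx P₁ P₂ x) = P₁ x ^ (1 - l) / P₂ x ^ (1 - l) := by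
    rw [LLx, ← Real.div_rpow hP1.le hP2.le, Real.rpow_def_of_pos (div_pos hP1 hP2), mul_comm]
  have key : P₂ x ^ (l:ℝ) * P₂ x ^ (1 - l) = P₂ x := by
    rw [← Real.rpow_add hP2]; norm_num
  have hB : (0:ℝ) < P₂ x ^ (1 - l) := Real.rpow_pos_of_pos hP2 _
  rw [hexp]
  calc P₂ x * (P₁ x ^ (1 - l) / P₂ x ^ (1 - l))
      = (P₂ x / P₂ x ^ (1 - l)) * P₁ x ^ (1 - l) := by ring
    _ = P₂ x ^ (l:ℝ) * P₁ x ^ (1 - l) := by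
        have hdiv : P₂ x / P₂ x ^ (1 - l) = P₂ x ^ (l:ℝ) := by
          rw [eq_comm, eq_div_iff hB.ne']; exact key
        rw [hdiv]
    _ = P₁ x ^ (1 - l) * P₂ x ^ l := mul_comm _ _

lemma mgf₁ (h1 : ∀ x, 0 < P₁ x) (h2 : ∀ x, 0 < P₂ x) (l : ℝ) :
    ∑ x, P₁ x * Real.exp (l * -LLx P₁ P₂ x) = Zf P₁ P₂ l := by
  refine Finset.sum_congr rfl fun x _ => ?_
  have hP1 := h1 x
  have hP2 := h2 x
  have hneg : -LLx P₁ P₂ x = Real.log (P₂ x / P₁ x) := by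
    rw [LLx, ← Real.log_inv, inv_div]
  have hexp : Real.exp (l * -LLx P₁ P₂ x) = P₂ x ^ (l:ℝ) / P₁ x ^ (l:ℝ) := by
    rw [hneg, ← Real.div_rpow hP2.le hP1.le, Real.rpow_def_of_pos (div_pos hP2 hP1), mul_comm]
  have key : P₁ x ^ (1 - l) * P₁ x ^ (l:ℝ) = P₁ x := by
    rw [← Real.rpow_add hP1]; norm_num
  have hB : (0:ℝ) < P₁ x ^ (l:ℝ) := Real.rpow_pos_of_pos hP1 _
  rw [hexp]
  calc P₁ x * (P₂ x ^ (l:ℝ) / P₁ x ^ (l:ℝ))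
      = (P₁ x / P₁ x ^ (l:ℝ)) * P₂ x ^ (l:ℝ) := by ring
    _ = P₁ x ^ (1 - l) * P₂ x ^ l := by
        have hdiv : P₁ x / P₁ x ^ (l:ℝ) = P₁ x ^ (1 - l) := by
          rw [eq_comm, eq_div_iff hB.ne']; exact key
        rw [hdiv]

end Aux

section Prob
set_option linter.unusedSectionVars false

variable {P P₁ P₂ : 𝒳 → ℝ}

lemma prodProb_nonneg (hP : ∀ x, 0 ≤ P x) {N : ℕ} (S : Set (Fin N → 𝒳)) :
    0 ≤ prodProb P S :=
  Finset.sum_nonneg fun ω _ => Set.indicator_nonneg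
    (fun ω' _ => Finset.prod_nonneg fun i _ => hP _) ω

lemma prodProb_mono (hP : ∀ x, 0 ≤ P x) {N : ℕ} {S T : Set (Fin N → 𝒳)} (hST : S ⊆ T) :
    prodProb P S ≤ prodProb P T :=
  Finset.sum_le_sum fun ω _ => Set.indicator_le_indicator_of_subset hST
    (fun ω' => Finset.prod_nonneg fun i _ => hP _) ω

lemma prodProb_univ (hs : ∑ x, P x = 1) (N : ℕ) :
    prodProb P (Set.univ : Set (Fin N → 𝒳)) = 1 := by
  simp only [prodProb, Set.indicator_univ]
  have h := Finset.prod_univ_sum (fun _ : Fin N => (Finset.univ : Finset 𝒳)) (fun _ x => P x)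
  rw [Fintype.piFinset_univ] at h
  rw [← h]
  simp [hs]

lemma prodProb_empty (P : 𝒳 → ℝ) (N : ℕ) : prodProb P (∅ : Set (Fin N → 𝒳)) = 0 := by
  simp [prodProb]

lemma prodProb_le_one (hP : ∀ x, 0 ≤ P x) (hs : ∑ x, P x = 1) {N : ℕ} (S : Set (Fin N → 𝒳)) :
    prodProb P S ≤ 1 := by
  rw [← prodProb_univ hs N]
  exact prodProb_mono hP (Set.subset_univ S)

lemma prodProb_union_le (hP : ∀ x, 0 ≤ P x) {N : ℕ} (S T : Set (Fin N → 𝒳)) :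
    prodProb P (S ∪ T) ≤ prodProb P S + prodProb P T := by
  rw [prodProb, prodProb, prodProb, ← Finset.sum_add_distrib]
  refine Finset.sum_le_sum fun ω _ => ?_
  have hf : (0:ℝ) ≤ ∏ i, P (ω i) := Finset.prod_nonneg fun i _ => hP _
  by_cases hS : ω ∈ S
  · rw [Set.indicator_of_mem (Set.mem_union_left _ hS), Set.indicator_of_mem hS]
    have hT0 : 0 ≤ T.indicator (fun ω' => ∏ i, P (ω' i)) ω :=
      Set.indicator_nonneg (fun _ _ => Finset.prod_nonneg fun i _ => hP _) ω
    linarith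
  · by_cases hT : ω ∈ T
    · rw [Set.indicator_of_mem (Set.mem_union_right _ hT), Set.indicator_of_notMem hS,
        Set.indicator_of_mem hT]
      linarith
    · rw [Set.indicator_of_notMem (show ω ∉ S ∪ T by simp [hS, hT]),
        Set.indicator_of_notMem hS, Set.indicator_of_notMem hT]
      norm_num

lemma chernoff (P : 𝒳 → ℝ) (hP : ∀ x, 0 < P x) (hs : ∑ x, P x = 1) {N : ℕ}
    (I : Finset (Fin N)) (g : 𝒳 → ℝ) (t c M : ℝ) (m : ℕ) (ht : 0 ≤ t)
    (hM : ∑ x, P x * Real.exp (t * g x) = M) (hm : I.card = m) :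
    prodProb P {ω : Fin N → 𝒳 | c ≤ ∑ i ∈ I, g (ω i)} ≤ Real.exp (-(t * c)) * M ^ m := by
  subst hM hm
  have hfac : ∀ ω : Fin N → 𝒳,
      (∏ i, (if i ∈ I then P (ω i) * Real.exp (t * g (ω i)) else P (ω i)))
      = Real.exp (t * ∑ i ∈ I, g (ω i)) * ∏ i, P (ω i) := by
    intro ω
    rw [← Finset.prod_mul_prod_compl I
      (fun i => if i ∈ I then P (ω i) * Real.exp (t * g (ω i)) else P (ω i))]
    have e1 : (∏ i ∈ I, (if i ∈ I then P (ω i) * Real.exp (t * g (ω i)) else P (ω i)))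
        = (∏ i ∈ I, Real.exp (t * g (ω i))) * ∏ i ∈ I, P (ω i) := by
      rw [← Finset.prod_mul_distrib]
      exact Finset.prod_congr rfl fun i hi => by rw [if_pos hi]; ring
    have e2 : (∏ i ∈ Iᶜ, (if i ∈ I then P (ω i) * Real.exp (t * g (ω i)) else P (ω i)))
        = ∏ i ∈ Iᶜ, P (ω i) :=
      Finset.prod_congr rfl fun i hi => by rw [if_neg (Finset.mem_compl.mp hi)]
    rw [e1, e2, ← Real.exp_sum, ← Finset.mul_sum, mul_assoc,
      Finset.prod_mul_prod_compl I (fun i => P (ω i))]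
  have key : ∀ ω : Fin N → 𝒳,
      ({ω : Fin N → 𝒳 | c ≤ ∑ i ∈ I, g (ω i)}.indicator (fun ω' => ∏ i, P (ω' i)) ω)
      ≤ Real.exp (-(t * c)) *
        ∏ i, (if i ∈ I then P (ω i) * Real.exp (t * g (ω i)) else P (ω i)) := by
    intro ω
    rw [hfac ω]
    by_cases hω : ω ∈ {ω : Fin N → 𝒳 | c ≤ ∑ i ∈ I, g (ω i)}
    · rw [Set.indicator_of_mem hω]
      have hc : c ≤ ∑ i ∈ I, g (ω i) := hω
      have h1 : (1:ℝ) ≤ Real.exp (-(t * c)) * Real.exp (t * ∑ i ∈ I, g (ω i)) := by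
        rw [← Real.exp_add]
        apply Real.one_le_exp
        nlinarith
      calc (∏ i, P (ω i)) = 1 * ∏ i, P (ω i) := (one_mul _).symm
        _ ≤ (Real.exp (-(t * c)) * Real.exp (t * ∑ i ∈ I, g (ω i))) * ∏ i, P (ω i) :=
            mul_le_mul_of_nonneg_right h1 (Finset.prod_nonneg fun i _ => (hP _).le)
        _ = Real.exp (-(t * c)) * (Real.exp (t * ∑ i ∈ I, g (ω i)) * ∏ i, P (ω i)) := by ring
    · rw [Set.indicator_of_notMem hω]
      have : (0:ℝ) ≤ ∏ i, P (ω i) := Finset.prod_nonneg fun i _ => (hP _).le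
      positivity
  calc prodProb P {ω : Fin N → 𝒳 | c ≤ ∑ i ∈ I, g (ω i)}
      ≤ ∑ ω : Fin N → 𝒳, Real.exp (-(t * c)) *
          ∏ i, (if i ∈ I then P (ω i) * Real.exp (t * g (ω i)) else P (ω i)) :=
        Finset.sum_le_sum fun ω _ => key ω
    _ = Real.exp (-(t * c)) * ∑ ω : Fin N → 𝒳,
          ∏ i, (if i ∈ I then P (ω i) * Real.exp (t * g (ω i)) else P (ω i)) := by
        rw [Finset.mul_sum]
    _ = Real.exp (-(t * c)) *
          ∏ i : Fin N, ∑ x, (if i ∈ I then P x * Real.exp (t * g x) else P x) := by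
        have h := Finset.prod_univ_sum (fun _ : Fin N => (Finset.univ : Finset 𝒳))
          (fun i x => if i ∈ I then P x * Real.exp (t * g x) else P x)
        rw [Fintype.piFinset_univ] at h
        rw [h]
    _ = Real.exp (-(t * c)) * (∑ x, P x * Real.exp (t * g x)) ^ I.card := by
        congr 1
        have hin : ∀ i : Fin N, (∑ x, (if i ∈ I then P x * Real.exp (t * g x) else P x))
            = (if i ∈ I then (∑ x, P x * Real.exp (t * g x)) else 1) := by
          intro i
          split_ifs with h
          · rfl
          · exact hs
        rw [Finset.prod_congr rfl fun i _ => hin i,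
          ← Finset.prod_mul_prod_compl I (fun i => if i ∈ I then (∑ x, P x * Real.exp (t * g x)) else 1),
          Finset.prod_congr rfl (fun i hi => if_pos hi),
          Finset.prod_congr (rfl : Iᶜ = Iᶜ) (fun i hi => if_neg (Finset.mem_compl.mp hi)),
          Finset.prod_const, Finset.prod_const_one, mul_one]

end Prob

section Tails
set_option linter.unusedSectionVars false
set_option linter.unusedVariables false

variable {P₁ P₂ : 𝒳 → ℝ}

lemma card_filter_lt {N : ℕ} (n : ℕ) (h : n ≤ N) :
    (Finset.univ.filter (fun i : Fin N => (i : ℕ) < n)).card = n := by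
  have hset : Finset.univ.filter (fun i : Fin N => (i : ℕ) < n)
      = Finset.map (Fin.castLEEmb h) Finset.univ := by
    ext i
    rw [Finset.mem_filter, Finset.mem_map]
    constructor
    · rintro ⟨-, hi⟩
      exact ⟨⟨(i : ℕ), hi⟩, Finset.mem_univ _, Fin.ext rfl⟩
    · rintro ⟨j, -, rfl⟩
      exact ⟨Finset.mem_univ _, j.isLt⟩
  rw [hset, Finset.card_map, Finset.card_univ, Fintype.card_fin]

lemma card_filter_ge {N : ℕ} (n : ℕ) (h : n ≤ N) :
    (Finset.univ.filter (fun i : Fin N => n ≤ (i : ℕ))).card = N - n := by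
  have h2 := Finset.card_filter_add_card_filter_not
    (s := (Finset.univ : Finset (Fin N))) (p := fun i : Fin N => (i : ℕ) < n)
  have h3 : Finset.univ.filter (fun i : Fin N => ¬ (i : ℕ) < n)
      = Finset.univ.filter (fun i : Fin N => n ≤ (i : ℕ)) := by
    apply Finset.filter_congr
    intro i _
    simp [not_lt]
  rw [h3, card_filter_lt n h, Finset.card_univ, Fintype.card_fin] at h2
  omega

lemma S1_congr {N : ℕ} (n : ℕ) {ω ω' : Fin N → 𝒳} (h : ∀ i : Fin N, (i : ℕ) < n → ω i = ω' i) :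
    S1 P₁ P₂ n ω = S1 P₁ P₂ n ω' :=
  Finset.sum_congr rfl fun i hi => by rw [h i (Finset.mem_filter.mp hi).2]

lemma tail_S1_up (h1 : ∀ x, 0 < P₁ x) (h2 : ∀ x, 0 < P₂ x)
    (hs1 : ∑ x, P₁ x = 1) (hs2 : ∑ x, P₂ x = 1)
    {l : ℝ} (hl : l ∈ Set.Icc (0:ℝ) 1) {N : ℕ} (n : ℕ) (hn : n ≤ N) :
    prodProb P₂ {ω : Fin N → 𝒳 | (n : ℝ) * thf P₁ P₂ l ≤ S1 P₁ P₂ n ω}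
      ≤ Real.exp (-((n : ℝ) * kl (tilt P₁ P₂ l) P₂)) := by
  have hch := chernoff P₂ h2 hs2 (Finset.univ.filter (fun i : Fin N => (i : ℕ) < n))
    (LLx P₁ P₂) (1 - l) ((n : ℝ) * thf P₁ P₂ l) (Zf P₁ P₂ l) n
    (by linarith [hl.2]) (mgf₂ h1 h2 l) (card_filter_lt n hn)
  have heq : Real.exp (-((1 - l) * ((n : ℝ) * thf P₁ P₂ l))) * Zf P₁ P₂ l ^ n
      = Real.exp (-((n : ℝ) * kl (tilt P₁ P₂ l) P₂)) := by
    rw [show Zf P₁ P₂ l ^ n = Real.exp ((n : ℝ) * Real.log (Zf P₁ P₂ l)) from by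
      rw [Real.exp_nat_mul, Real.exp_log (Zf_pos h1 h2 l)], ← Real.exp_add,
      kl_tilt₂ h1 h2 l]
    congr 1
    ring
  rw [heq] at hch
  exact hch

lemma tail_S1_low (h1 : ∀ x, 0 < P₁ x) (h2 : ∀ x, 0 < P₂ x)
    (hs1 : ∑ x, P₁ x = 1) (hs2 : ∑ x, P₂ x = 1)
    {l : ℝ} (hl : l ∈ Set.Icc (0:ℝ) 1) {N : ℕ} (n : ℕ) (hn : n ≤ N) :
    prodProb P₁ {ω : Fin N → 𝒳 | S1 P₁ P₂ n ω ≤ (n : ℝ) * thf P₁ P₂ l}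
      ≤ Real.exp (-((n : ℝ) * kl (tilt P₁ P₂ l) P₁)) := by
  have hset : {ω : Fin N → 𝒳 | S1 P₁ P₂ n ω ≤ (n : ℝ) * thf P₁ P₂ l}
      = {ω : Fin N → 𝒳 | -((n : ℝ) * thf P₁ P₂ l) ≤
          ∑ i ∈ Finset.univ.filter (fun i : Fin N => (i : ℕ) < n), -LLx P₁ P₂ (ω i)} := by
    ext ω
    simp only [Set.mem_setOf_eq, Finset.sum_neg_distrib, neg_le_neg_iff]
    rfl
  rw [hset]
  have hch := chernoff P₁ h1 hs1 (Finset.univ.filter (fun i : Fin N => (i : ℕ) < n))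
    (fun x => -LLx P₁ P₂ x) l (-((n : ℝ) * thf P₁ P₂ l)) (Zf P₁ P₂ l) n
    hl.1 (mgf₁ h1 h2 l) (card_filter_lt n hn)
  have heq : Real.exp (-(l * -((n : ℝ) * thf P₁ P₂ l))) * Zf P₁ P₂ l ^ n
      = Real.exp (-((n : ℝ) * kl (tilt P₁ P₂ l) P₁)) := by
    rw [show Zf P₁ P₂ l ^ n = Real.exp ((n : ℝ) * Real.log (Zf P₁ P₂ l)) from by
      rw [Real.exp_nat_mul, Real.exp_log (Zf_pos h1 h2 l)], ← Real.exp_add,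
      kl_tilt₁ h1 h2 l]
    congr 1
    ring
  rw [heq] at hch
  exact hch

lemma tail_S2_up (h1 : ∀ x, 0 < P₁ x) (h2 : ∀ x, 0 < P₂ x)
    (hs1 : ∑ x, P₁ x = 1) (hs2 : ∑ x, P₂ x = 1)
    {l : ℝ} (hl : l ∈ Set.Icc (0:ℝ) 1) {N : ℕ} (n m : ℕ) (hm : N = n + m) :
    prodProb P₂ {ω : Fin N → 𝒳 | (m : ℝ) * thf P₁ P₂ l ≤ S2 P₁ P₂ n ω}
      ≤ Real.exp (-((m : ℝ) * kl (tilt P₁ P₂ l) P₂)) := by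
  have hcard : (Finset.univ.filter (fun i : Fin N => n ≤ (i : ℕ))).card = m := by
    rw [card_filter_ge n (by omega)]; omega
  have hch := chernoff P₂ h2 hs2 (Finset.univ.filter (fun i : Fin N => n ≤ (i : ℕ)))
    (LLx P₁ P₂) (1 - l) ((m : ℝ) * thf P₁ P₂ l) (Zf P₁ P₂ l) m
    (by linarith [hl.2]) (mgf₂ h1 h2 l) hcard
  have heq : Real.exp (-((1 - l) * ((m : ℝ) * thf P₁ P₂ l))) * Zf P₁ P₂ l ^ m
      = Real.exp (-((m : ℝ) * kl (tilt P₁ P₂ l) P₂)) := by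
    rw [show Zf P₁ P₂ l ^ m = Real.exp ((m : ℝ) * Real.log (Zf P₁ P₂ l)) from by
      rw [Real.exp_nat_mul, Real.exp_log (Zf_pos h1 h2 l)], ← Real.exp_add,
      kl_tilt₂ h1 h2 l]
    congr 1
    ring
  rw [heq] at hch
  exact hch

lemma tail_S2_low (h1 : ∀ x, 0 < P₁ x) (h2 : ∀ x, 0 < P₂ x)
    (hs1 : ∑ x, P₁ x = 1) (hs2 : ∑ x, P₂ x = 1)
    {l : ℝ} (hl : l ∈ Set.Icc (0:ℝ) 1) {N : ℕ} (n m : ℕ) (hm : N = n + m) :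
    prodProb P₁ {ω : Fin N → 𝒳 | S2 P₁ P₂ n ω ≤ (m : ℝ) * thf P₁ P₂ l}
      ≤ Real.exp (-((m : ℝ) * kl (tilt P₁ P₂ l) P₁)) := by
  have hcard : (Finset.univ.filter (fun i : Fin N => n ≤ (i : ℕ))).card = m := by
    rw [card_filter_ge n (by omega)]; omega
  have hset : {ω : Fin N → 𝒳 | S2 P₁ P₂ n ω ≤ (m : ℝ) * thf P₁ P₂ l}
      = {ω : Fin N → 𝒳 | -((m : ℝ) * thf P₁ P₂ l) ≤
          ∑ i ∈ Finset.univ.filter (fun i : Fin N => n ≤ (i : ℕ)), -LLx P₁ P₂ (ω i)} := by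
    ext ω
    simp only [Set.mem_setOf_eq, Finset.sum_neg_distrib, neg_le_neg_iff]
    rfl
  rw [hset]
  have hch := chernoff P₁ h1 hs1 (Finset.univ.filter (fun i : Fin N => n ≤ (i : ℕ)))
    (fun x => -LLx P₁ P₂ x) l (-((m : ℝ) * thf P₁ P₂ l)) (Zf P₁ P₂ l) m
    hl.1 (mgf₁ h1 h2 l) hcard
  have heq : Real.exp (-(l * -((m : ℝ) * thf P₁ P₂ l))) * Zf P₁ P₂ l ^ m
      = Real.exp (-((m : ℝ) * kl (tilt P₁ P₂ l) P₁)) := by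
    rw [show Zf P₁ P₂ l ^ m = Real.exp ((m : ℝ) * Real.log (Zf P₁ P₂ l)) from by
      rw [Real.exp_nat_mul, Real.exp_log (Zf_pos h1 h2 l)], ← Real.exp_add,
      kl_tilt₁ h1 h2 l]
    congr 1
    ring
  rw [heq] at hch
  exact hch

end Tails

section Gibbs
set_option linter.unusedSectionVars false
set_option linter.unusedVariables false

lemma kl_key {Q P : 𝒳 → ℝ} (hQ : ∀ x, 0 < Q x) (hP : ∀ x, 0 < P x) (x : 𝒳) :
    Q x - P x ≤ Q x * Real.log (Q x / P x) := by
  have h := Real.log_le_sub_one_of_pos (div_pos (hP x) (hQ x))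
  have hlog : Real.log (Q x / P x) = -Real.log (P x / Q x) := by
    rw [← Real.log_inv, inv_div]
  have hq := hQ x
  have hmul := mul_le_mul_of_nonneg_left h hq.le
  have hPQ : Q x * (P x / Q x - 1) = P x - Q x := by field_simp
  rw [hlog]
  nlinarith

lemma kl_key_strict {Q P : 𝒳 → ℝ} (hQ : ∀ x, 0 < Q x) (hP : ∀ x, 0 < P x) (x : 𝒳)
    (hxne : Q x ≠ P x) :
    Q x - P x < Q x * Real.log (Q x / P x) := by
  have hne1 : P x / Q x ≠ 1 :=
    fun h => hxne ((div_eq_one_iff_eq (hQ x).ne').mp h).symm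
  have h := Real.log_lt_sub_one_of_pos (div_pos (hP x) (hQ x)) hne1
  have hlog : Real.log (Q x / P x) = -Real.log (P x / Q x) := by
    rw [← Real.log_inv, inv_div]
  have hq := hQ x
  have hmul := mul_lt_mul_of_pos_left h hq
  have hPQ : Q x * (P x / Q x - 1) = P x - Q x := by field_simp
  rw [hlog]
  nlinarith

lemma kl_nonneg' {Q P : 𝒳 → ℝ} (hQ : ∀ x, 0 < Q x) (hP : ∀ x, 0 < P x)
    (hQs : ∑ x, Q x = 1) (hPs : ∑ x, P x = 1) : 0 ≤ kl Q P := by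
  calc (0:ℝ) = ∑ x, (Q x - P x) := by rw [Finset.sum_sub_distrib, hQs, hPs]; ring
    _ ≤ ∑ x, Q x * Real.log (Q x / P x) := Finset.sum_le_sum fun x _ => kl_key hQ hP x
    _ = kl Q P := rfl

lemma kl_pos' {Q P : 𝒳 → ℝ} (hQ : ∀ x, 0 < Q x) (hP : ∀ x, 0 < P x)
    (hQs : ∑ x, Q x = 1) (hPs : ∑ x, P x = 1) (hne : Q ≠ P) : 0 < kl Q P := by
  obtain ⟨x₀, hx₀⟩ := Function.ne_iff.mp hne
  calc (0:ℝ) = ∑ x, (Q x - P x) := by rw [Finset.sum_sub_distrib, hQs, hPs]; ring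
    _ < ∑ x, Q x * Real.log (Q x / P x) :=
      Finset.sum_lt_sum (fun x _ => kl_key hQ hP x)
        ⟨x₀, Finset.mem_univ _, kl_key_strict hQ hP x₀ hx₀⟩
    _ = kl Q P := rfl

variable {P₁ P₂ : 𝒳 → ℝ}

lemma tilt_half_ne₁ (h1 : ∀ x, 0 < P₁ x) (h2 : ∀ x, 0 < P₂ x)
    (hs1 : ∑ x, P₁ x = 1) (hs2 : ∑ x, P₂ x = 1) (hne : P₁ ≠ P₂) :
    tilt P₁ P₂ (1/2) ≠ P₁ := by
  intro h
  set Z := Zf P₁ P₂ (1/2) with hZdef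
  have hZ : 0 < Z := Zf_pos h1 h2 _
  have hx : ∀ x, P₂ x = Z ^ 2 * P₁ x := by
    intro x
    have hc := congrFun h x
    have hnum : P₁ x ^ (1 - (1/2:ℝ)) * P₂ x ^ ((1/2):ℝ) = P₁ x * Z := by
      rw [show tilt P₁ P₂ (1/2) x
          = P₁ x ^ (1 - (1/2:ℝ)) * P₂ x ^ ((1/2):ℝ) / Z from rfl] at hc
      field_simp at hc
      linarith [hc]
    have he : (1 - (1/2:ℝ)) = 1/2 := by norm_num
    rw [he] at hnum
    set u := P₁ x ^ ((1:ℝ)/2) with hu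
    set v := P₂ x ^ ((1:ℝ)/2) with hv
    have hupos : 0 < u := Real.rpow_pos_of_pos (h1 x) _
    have hvpos : 0 < v := Real.rpow_pos_of_pos (h2 x) _
    have huu : u * u = P₁ x := by
      rw [hu, ← Real.rpow_add (h1 x)]; norm_num
    have hvv : v * v = P₂ x := by
      rw [hv, ← Real.rpow_add (h2 x)]; norm_num
    have hnum' : u * v = (u * u) * Z := by
      rw [huu]; linarith [hnum]
    have hveq : v = u * Z := by
      have := mul_left_cancel₀ hupos.ne' (by linarith [hnum'] : u * v = u * (u * Z))
      exact this
    calc P₂ x = v * v := hvv.symm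
      _ = (u * Z) * (u * Z) := by rw [hveq]
      _ = Z ^ 2 * (u * u) := by ring
      _ = Z ^ 2 * P₁ x := by rw [huu]
  have hsum : (1:ℝ) = Z ^ 2 := by
    calc (1:ℝ) = ∑ x, P₂ x := hs2.symm
      _ = ∑ x, Z ^ 2 * P₁ x := Finset.sum_congr rfl fun x _ => hx x
      _ = Z ^ 2 * ∑ x, P₁ x := by rw [← Finset.mul_sum]
      _ = Z ^ 2 := by rw [hs1, mul_one]
  have hZ1 : Z = 1 := by nlinarith
  apply hne
  funext x
  have := hx x
  rw [hZ1] at this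
  simp at this
  exact this.symm

lemma tilt_half_ne₂ (h1 : ∀ x, 0 < P₁ x) (h2 : ∀ x, 0 < P₂ x)
    (hs1 : ∑ x, P₁ x = 1) (hs2 : ∑ x, P₂ x = 1) (hne : P₁ ≠ P₂) :
    tilt P₁ P₂ (1/2) ≠ P₂ := by
  intro h
  set Z := Zf P₁ P₂ (1/2) with hZdef
  have hZ : 0 < Z := Zf_pos h1 h2 _
  have hx : ∀ x, P₁ x = Z ^ 2 * P₂ x := by
    intro x
    have hc := congrFun h x
    have hnum : P₁ x ^ (1 - (1/2:ℝ)) * P₂ x ^ ((1/2):ℝ) = P₂ x * Z := by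
      rw [show tilt P₁ P₂ (1/2) x
          = P₁ x ^ (1 - (1/2:ℝ)) * P₂ x ^ ((1/2):ℝ) / Z from rfl] at hc
      field_simp at hc
      linarith [hc]
    have he : (1 - (1/2:ℝ)) = 1/2 := by norm_num
    rw [he] at hnum
    set u := P₁ x ^ ((1:ℝ)/2) with hu
    set v := P₂ x ^ ((1:ℝ)/2) with hv
    have hupos : 0 < u := Real.rpow_pos_of_pos (h1 x) _
    have hvpos : 0 < v := Real.rpow_pos_of_pos (h2 x) _
    have huu : u * u = P₁ x := by
      rw [hu, ← Real.rpow_add (h1 x)]; norm_num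
    have hvv : v * v = P₂ x := by
      rw [hv, ← Real.rpow_add (h2 x)]; norm_num
    have hnum' : v * u = (v * v) * Z := by
      rw [hvv]; linarith [hnum]
    have hueq : u = v * Z := by
      have := mul_left_cancel₀ hvpos.ne' (by linarith [hnum'] : v * u = v * (v * Z))
      exact this
    calc P₁ x = u * u := huu.symm
      _ = (v * Z) * (v * Z) := by rw [hueq]
      _ = Z ^ 2 * (v * v) := by ring
      _ = Z ^ 2 * P₂ x := by rw [hvv]
  have hsum : (1:ℝ) = Z ^ 2 := by
    calc (1:ℝ) = ∑ x, P₁ x := hs1.symm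
      _ = ∑ x, Z ^ 2 * P₂ x := Finset.sum_congr rfl fun x _ => hx x
      _ = Z ^ 2 * ∑ x, P₂ x := by rw [← Finset.mul_sum]
      _ = Z ^ 2 := by rw [hs2, mul_one]
  have hZ1 : Z = 1 := by nlinarith
  apply hne
  funext x
  have := hx x
  rw [hZ1] at this
  simp at this
  exact this

end Gibbs

section Tests
set_option linter.unusedSectionVars false
set_option linter.unusedVariables false

variable {P₁ P₂ : 𝒳 → ℝ}

/-- Single-phase (fixed-length) likelihood-ratio test. -/
lemma FL_test (h1 : ∀ x, 0 < P₁ x) (h2 : ∀ x, 0 < P₂ x)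
    (hs1 : ∑ x, P₁ x = 1) (hs2 : ∑ x, P₂ x = 1)
    {l : ℝ} (hl : l ∈ Set.Icc (0:ℝ) 1) (n : ℕ) :
    ∃ T : HypTest 𝒳 n,
      prodProb P₁ {ω | n < T.τ ω} = 0 ∧ prodProb P₂ {ω | n < T.τ ω} = 0 ∧
      prodProb P₁ T.A2 ≤ Real.exp (-((n : ℝ) * kl (tilt P₁ P₂ l) P₁)) ∧
      prodProb P₂ T.A1 ≤ Real.exp (-((n : ℝ) * kl (tilt P₁ P₂ l) P₂)) := by
  refine ⟨⟨fun _ => n,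
    {ω : Fin n → 𝒳 | (n : ℝ) * thf P₁ P₂ l ≤ S1 P₁ P₂ n ω},
    {ω : Fin n → 𝒳 | (n : ℝ) * thf P₁ P₂ l ≤ S1 P₁ P₂ n ω}ᶜ,
    fun _ => le_rfl, fun _ _ _ => rfl, ?_, ?_, disjoint_compl_right,
    Set.union_compl_self _⟩, ?_, ?_, ?_, ?_⟩
  · intro ω ω' h
    have hωω : ω = ω' := funext fun i => h i i.isLt
    rw [hωω]
  · intro ω ω' h
    have hωω : ω = ω' := funext fun i => h i i.isLt
    rw [hωω]
  · rw [show {ω : Fin n → 𝒳 | n < n} = (∅ : Set (Fin n → 𝒳)) by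
      ext ω; simp, prodProb_empty]
  · rw [show {ω : Fin n → 𝒳 | n < n} = (∅ : Set (Fin n → 𝒳)) by
      ext ω; simp, prodProb_empty]
  · refine (prodProb_mono (fun x => (h1 x).le) ?_).trans
      (tail_S1_low h1 h2 hs1 hs2 hl n le_rfl)
    intro ω hω
    have hω' : ¬ ((n : ℝ) * thf P₁ P₂ l ≤ S1 P₁ P₂ n ω) := hω
    exact le_of_not_ge hω'
  · exact tail_S1_up h1 h2 hs1 hs2 hl n le_rfl

/-- The decision region of the two-phase test choosing `H₁`. -/
def tpA1 (P₁ P₂ : 𝒳 → ℝ) (k n : ℕ) (a b t : ℝ) : Set (Fin ((k+1)*n) → 𝒳) :=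
  {ω | (n : ℝ) * a ≤ S1 P₁ P₂ n ω ∨
    ((n : ℝ) * b < S1 P₁ P₂ n ω ∧ S1 P₁ P₂ n ω < (n : ℝ) * a ∧
      ((k * n : ℕ) : ℝ) * t ≤ S2 P₁ P₂ n ω)}

/-- Stopping time of the two-phase test. -/
noncomputable def tpTau (P₁ P₂ : 𝒳 → ℝ) (k n : ℕ) (a b : ℝ)
    (ω : Fin ((k+1)*n) → 𝒳) : ℕ :=
  if (n : ℝ) * b < S1 P₁ P₂ n ω ∧ S1 P₁ P₂ n ω < (n : ℝ) * a then (k+1)*n else n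

lemma tpTau_ge (k n : ℕ) (a b : ℝ) (ω : Fin ((k+1)*n) → 𝒳) :
    n ≤ tpTau P₁ P₂ k n a b ω := by
  rw [tpTau]
  split_ifs
  · exact Nat.le_mul_of_pos_left n k.succ_pos
  · exact le_rfl

/-- The two-phase test. -/
lemma twophase (h1 : ∀ x, 0 < P₁ x) (h2 : ∀ x, 0 < P₂ x)
    (hs1 : ∑ x, P₁ x = 1) (hs2 : ∑ x, P₂ x = 1)
    {la lb : ℝ} (hla : la ∈ Set.Icc (0:ℝ) 1) (hlb : lb ∈ Set.Icc (0:ℝ) 1)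
    (k n : ℕ) (hk : 1 ≤ k) (hn : 1 ≤ n) :
    ∃ T : HypTest 𝒳 ((k+1)*n),
      prodProb P₁ {ω | n < T.τ ω} ≤ Real.exp (-((n : ℝ) * kl (tilt P₁ P₂ lb) P₁)) ∧
      prodProb P₂ {ω | n < T.τ ω} ≤ Real.exp (-((n : ℝ) * kl (tilt P₁ P₂ la) P₂)) ∧
      prodProb P₁ T.A2 ≤ Real.exp (-((n : ℝ) * kl (tilt P₁ P₂ la) P₁))
        + Real.exp (-(((k * n : ℕ) : ℝ) * kl (tilt P₁ P₂ (1/2)) P₁)) ∧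
      prodProb P₂ T.A1 ≤ Real.exp (-((n : ℝ) * kl (tilt P₁ P₂ lb) P₂))
        + Real.exp (-(((k * n : ℕ) : ℝ) * kl (tilt P₁ P₂ (1/2)) P₂)) := by
  set a := thf P₁ P₂ lb with ha
  set b := thf P₁ P₂ la with hb
  set t := thf P₁ P₂ (1/2) with htd
  have hnN : n ≤ (k+1)*n := Nat.le_mul_of_pos_left n k.succ_pos
  have hNsum : (k+1)*n = n + k*n := by ring
  have hadapt : ∀ ω ω' : Fin ((k+1)*n) → 𝒳,
      (∀ i : Fin ((k+1)*n), (i : ℕ) < tpTau P₁ P₂ k n a b ω → ω i = ω' i) →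
      (ω ∈ tpA1 P₁ P₂ k n a b t ↔ ω' ∈ tpA1 P₁ P₂ k n a b t) := by
    intro ω ω' h
    by_cases hmid : (n : ℝ) * b < S1 P₁ P₂ n ω ∧ S1 P₁ P₂ n ω < (n : ℝ) * a
    · have hτ : tpTau P₁ P₂ k n a b ω = (k+1)*n := if_pos hmid
      have hωω : ω = ω' := funext fun i => h i (by rw [hτ]; exact i.isLt)
      rw [hωω]
    · have hτ : tpTau P₁ P₂ k n a b ω = n := if_neg hmid
      have hcoord : ∀ i : Fin ((k+1)*n), (i : ℕ) < n → ω i = ω' i :=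
        fun i hi => h i (by rw [hτ]; exact hi)
      have hS : S1 P₁ P₂ n ω = S1 P₁ P₂ n ω' := S1_congr n hcoord
      simp only [tpA1, Set.mem_setOf_eq, ← hS]
      constructor
      · rintro (h' | ⟨hm1, hm2, -⟩)
        · exact Or.inl h'
        · exact absurd ⟨hm1, hm2⟩ hmid
      · rintro (h' | ⟨hm1, hm2, -⟩)
        · exact Or.inl h'
        · exact absurd ⟨hm1, hm2⟩ hmid
  refine ⟨⟨tpTau P₁ P₂ k n a b, tpA1 P₁ P₂ k n a b t, (tpA1 P₁ P₂ k n a b t)ᶜ,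
    ?_, ?_, hadapt, ?_, disjoint_compl_right, Set.union_compl_self _⟩, ?_, ?_, ?_, ?_⟩
  · -- tau_le
    intro ω
    rw [tpTau]
    split_ifs
    · exact le_rfl
    · exact hnN
  · -- stopping
    intro ω ω' h
    have hcoord : ∀ i : Fin ((k+1)*n), (i : ℕ) < n → ω i = ω' i :=
      fun i hi => h i (lt_of_lt_of_le hi (tpTau_ge k n a b ω))
    have hS : S1 P₁ P₂ n ω = S1 P₁ P₂ n ω' := S1_congr n hcoord
    rw [tpTau, tpTau, ← hS]
  · -- adapted2
    intro ω ω' h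
    exact not_congr (hadapt ω ω' h)
  · -- phase-2 probability under P₁
    have hset : {ω : Fin ((k+1)*n) → 𝒳 | n < tpTau P₁ P₂ k n a b ω}
        ⊆ {ω : Fin ((k+1)*n) → 𝒳 | S1 P₁ P₂ n ω ≤ (n : ℝ) * a} := by
      intro ω hω
      simp only [Set.mem_setOf_eq, tpTau] at hω ⊢
      by_cases hmid : (n : ℝ) * b < S1 P₁ P₂ n ω ∧ S1 P₁ P₂ n ω < (n : ℝ) * a
      · exact hmid.2.le
      · rw [if_neg hmid] at hω
        exact absurd hω (lt_irrefl n)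
    exact (prodProb_mono (fun x => (h1 x).le) hset).trans
      (tail_S1_low h1 h2 hs1 hs2 hlb n hnN)
  · -- phase-2 probability under P₂
    have hset : {ω : Fin ((k+1)*n) → 𝒳 | n < tpTau P₁ P₂ k n a b ω}
        ⊆ {ω : Fin ((k+1)*n) → 𝒳 | (n : ℝ) * b ≤ S1 P₁ P₂ n ω} := by
      intro ω hω
      simp only [Set.mem_setOf_eq, tpTau] at hω ⊢
      by_cases hmid : (n : ℝ) * b < S1 P₁ P₂ n ω ∧ S1 P₁ P₂ n ω < (n : ℝ) * a
      · exact hmid.1.le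
      · rw [if_neg hmid] at hω
        exact absurd hω (lt_irrefl n)
    exact (prodProb_mono (fun x => (h2 x).le) hset).trans
      (tail_S1_up h1 h2 hs1 hs2 hla n hnN)
  · -- error under P₁ (choosing H₂)
    have hsub : (tpA1 P₁ P₂ k n a b t)ᶜ
        ⊆ {ω : Fin ((k+1)*n) → 𝒳 | S1 P₁ P₂ n ω ≤ (n : ℝ) * b}
          ∪ {ω : Fin ((k+1)*n) → 𝒳 | S2 P₁ P₂ n ω ≤ ((k * n : ℕ) : ℝ) * t} := by
      intro ω hω
      simp only [tpA1, Set.mem_compl_iff, Set.mem_setOf_eq, not_or, not_and, not_le,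
        not_lt] at hω
      obtain ⟨hna, hrest⟩ := hω
      by_cases hb' : (n : ℝ) * b < S1 P₁ P₂ n ω
      · exact Or.inr (Set.mem_setOf_eq ▸ (hrest hb' hna).le)
      · exact Or.inl (Set.mem_setOf_eq ▸ le_of_not_gt hb')
    calc prodProb P₁ (tpA1 P₁ P₂ k n a b t)ᶜ
        ≤ prodProb P₁ ({ω : Fin ((k+1)*n) → 𝒳 | S1 P₁ P₂ n ω ≤ (n : ℝ) * b}
          ∪ {ω : Fin ((k+1)*n) → 𝒳 | S2 P₁ P₂ n ω ≤ ((k * n : ℕ) : ℝ) * t}) :=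
          prodProb_mono (fun x => (h1 x).le) hsub
      _ ≤ prodProb P₁ {ω : Fin ((k+1)*n) → 𝒳 | S1 P₁ P₂ n ω ≤ (n : ℝ) * b}
          + prodProb P₁ {ω : Fin ((k+1)*n) → 𝒳 | S2 P₁ P₂ n ω ≤ ((k * n : ℕ) : ℝ) * t} :=
          prodProb_union_le (fun x => (h1 x).le) _ _
      _ ≤ Real.exp (-((n : ℝ) * kl (tilt P₁ P₂ la) P₁))
          + Real.exp (-(((k * n : ℕ) : ℝ) * kl (tilt P₁ P₂ (1/2)) P₁)) :=
          add_le_add (tail_S1_low h1 h2 hs1 hs2 hla n hnN)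
            (tail_S2_low h1 h2 hs1 hs2 (by norm_num) n (k*n) hNsum)
  · -- error under P₂ (choosing H₁)
    have hsub : tpA1 P₁ P₂ k n a b t
        ⊆ {ω : Fin ((k+1)*n) → 𝒳 | (n : ℝ) * a ≤ S1 P₁ P₂ n ω}
          ∪ {ω : Fin ((k+1)*n) → 𝒳 | ((k * n : ℕ) : ℝ) * t ≤ S2 P₁ P₂ n ω} := by
      rintro ω (h' | ⟨-, -, h'⟩)
      · exact Or.inl h'
      · exact Or.inr h'
    calc prodProb P₂ (tpA1 P₁ P₂ k n a b t)
        ≤ prodProb P₂ ({ω : Fin ((k+1)*n) → 𝒳 | (n : ℝ) * a ≤ S1 P₁ P₂ n ω}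
          ∪ {ω : Fin ((k+1)*n) → 𝒳 | ((k * n : ℕ) : ℝ) * t ≤ S2 P₁ P₂ n ω}) :=
          prodProb_mono (fun x => (h2 x).le) hsub
      _ ≤ prodProb P₂ {ω : Fin ((k+1)*n) → 𝒳 | (n : ℝ) * a ≤ S1 P₁ P₂ n ω}
          + prodProb P₂ {ω : Fin ((k+1)*n) → 𝒳 | ((k * n : ℕ) : ℝ) * t ≤ S2 P₁ P₂ n ω} :=
          prodProb_union_le (fun x => (h2 x).le) _ _
      _ ≤ Real.exp (-((n : ℝ) * kl (tilt P₁ P₂ lb) P₂))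
          + Real.exp (-(((k * n : ℕ) : ℝ) * kl (tilt P₁ P₂ (1/2)) P₂)) :=
          add_le_add (tail_S1_up h1 h2 hs1 hs2 hlb n hnN)
            (tail_S2_up h1 h2 hs1 hs2 (by norm_num) n (k*n) hNsum)

end Tests

section MainHelpers
set_option linter.unusedSectionVars false
set_option linter.unusedVariables false

variable {P₁ P₂ : 𝒳 → ℝ}

lemma exp_mono_bound {E δ A : ℝ} (n : ℕ) (hb : E - δ ≤ A) :
    Real.exp (-((n : ℝ) * A)) ≤ Real.exp (-((E - δ) * (n : ℝ))) := by
  apply Real.exp_le_exp.mpr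
  rw [neg_le_neg_iff]
  calc (E - δ) * (n : ℝ) ≤ A * (n : ℝ) :=
      mul_le_mul_of_nonneg_right hb (Nat.cast_nonneg n)
    _ = (n : ℝ) * A := mul_comm _ _

lemma FL_achieve_step (h1 : ∀ x, 0 < P₁ x) (h2 : ∀ x, 0 < P₂ x)
    (hs1 : ∑ x, P₁ x = 1) (hs2 : ∑ x, P₂ x = 1)
    {l : ℝ} (hl : l ∈ Set.Icc (0:ℝ) 1) (γ δ E₁ E₂ : ℝ)
    (hb1 : E₁ - δ ≤ kl (tilt P₁ P₂ l) P₁) (hb2 : E₂ - δ ≤ kl (tilt P₁ P₂ l) P₂) (n : ℕ) :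
    ∃ T : HypTest 𝒳 n,
      prodProb P₁ {ω | n < T.τ ω} ≤ Real.exp (-(γ * n)) ∧
      prodProb P₂ {ω | n < T.τ ω} ≤ Real.exp (-(γ * n)) ∧
      prodProb P₁ T.A2 ≤ Real.exp (-((E₁ - δ) * n)) ∧
      prodProb P₂ T.A1 ≤ Real.exp (-((E₂ - δ) * n)) := by
  obtain ⟨T, hx1, hx2, hA2, hA1⟩ := FL_test h1 h2 hs1 hs2 hl n
  exact ⟨T, by rw [hx1]; positivity, by rw [hx2]; positivity,
    hA2.trans (exp_mono_bound n hb1), hA1.trans (exp_mono_bound n hb2)⟩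

lemma two_exp_bound {x y E δ : ℝ} (n : ℕ) (hδ : 0 < δ)
    (hx : x ≤ Real.exp (-((n : ℝ) * (E - δ/2))))
    (hy : y ≤ Real.exp (-((n : ℝ) * (E - δ/2))))
    (hlog : Real.log 2 ≤ (n : ℝ) * (δ/2)) :
    x + y ≤ Real.exp (-((E - δ) * (n : ℝ))) := by
  have h3 : Real.exp (-((n : ℝ) * (E - δ/2))) + Real.exp (-((n : ℝ) * (E - δ/2)))
      = Real.exp (Real.log 2 + -((n : ℝ) * (E - δ/2))) := by
    rw [Real.exp_add, Real.exp_log two_pos]; ring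
  calc x + y ≤ Real.exp (-((n : ℝ) * (E - δ/2))) + Real.exp (-((n : ℝ) * (E - δ/2))) :=
      add_le_add hx hy
    _ = Real.exp (Real.log 2 + -((n : ℝ) * (E - δ/2))) := h3
    _ ≤ Real.exp (-((E - δ) * (n : ℝ))) := Real.exp_le_exp.mpr (by nlinarith)

end MainHelpers

/-- Achievability part of Theorem 1: every pair in
`R_FD ∪ ([0,E₁(γ)] × [0,E₂(γ)])` is achievable by γ-almost-fixed-length tests. -/
theorem afl_achievability (P₁ P₂ : 𝒳 → ℝ)
    (h1pos : ∀ x, 0 < P₁ x) (h2pos : ∀ x, 0 < P₂ x)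
    (h1sum : ∑ x, P₁ x = 1) (h2sum : ∑ x, P₂ x = 1)
    (hne : P₁ ≠ P₂)
    (γ : ℝ) (hγ : 0 < γ) (E₁ E₂ : ℝ)
    (hE : (E₁, E₂) ∈ RFD P₁ P₂ ∪
      (Set.Icc 0 (E1exp P₁ P₂ γ) ×ˢ Set.Icc 0 (E2exp P₁ P₂ γ))) :
    AFLAchievable P₁ P₂ γ E₁ E₂ := by
  rcases hE with hRFD | hprod
  · -- fixed-length (R_FD) case
    simp only [RFD, Set.mem_setOf_eq] at hRFD
    obtain ⟨hE10, hE20, l, hl, hk1, hk2⟩ := hRFD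
    refine ⟨hE10, hE20, 1, one_pos, 1, Nat.one_pos, fun δ hδ => ⟨0, fun n hn => ?_⟩⟩
    refine ⟨n, by rw [pow_one, one_mul], ?_⟩
    exact FL_achieve_step h1pos h2pos h1sum h2sum hl γ δ E₁ E₂
      (by linarith) (by linarith) n
  · -- almost-fixed-length case
    simp only [Set.mem_prod, Set.mem_Icc] at hprod
    obtain ⟨⟨hE10, hE1u⟩, hE20, hE2u⟩ := hprod
    have hhalf : (1/2 : ℝ) ∈ Set.Icc (0:ℝ) 1 := by norm_num
    have htp : ∀ x, 0 < tilt P₁ P₂ (1/2) x := tilt_pos h1pos h2pos (1/2)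
    have hts : ∑ x, tilt P₁ P₂ (1/2) x = 1 := tilt_sum h1pos h2pos (1/2)
    have hD1 : 0 < kl (tilt P₁ P₂ (1/2)) P₁ :=
      kl_pos' htp h1pos hts h1sum (tilt_half_ne₁ h1pos h2pos h1sum h2sum hne)
    have hD2 : 0 < kl (tilt P₁ P₂ (1/2)) P₂ :=
      kl_pos' htp h2pos hts h2sum (tilt_half_ne₂ h1pos h2pos h1sum h2sum hne)
    set D : ℝ := min (kl (tilt P₁ P₂ (1/2)) P₁) (kl (tilt P₁ P₂ (1/2)) P₂) with hDdef
    have hD : 0 < D := lt_min hD1 hD2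
    set k : ℕ := ⌈(E₁ + E₂) / D⌉₊ + 1 with hkdef
    have hk1 : 1 ≤ k := Nat.le_add_left 1 _
    have hkD : E₁ + E₂ ≤ (k : ℝ) * D := by
      have ha : (E₁ + E₂) / D ≤ (⌈(E₁ + E₂) / D⌉₊ : ℝ) := Nat.le_ceil _
      have hb : ((⌈(E₁ + E₂) / D⌉₊ : ℕ) : ℝ) ≤ (k : ℝ) := by
        exact_mod_cast Nat.le_succ _
      have := (div_le_iff₀ hD).mp (ha.trans hb)
      linarith
    refine ⟨hE10, hE20, (k : ℝ) + 1, by positivity, 1, Nat.one_pos, fun δ hδ => ?_⟩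
    by_cases hSa : {E | ∃ l ∈ Set.Icc (0:ℝ) 1,
        γ ≤ kl (tilt P₁ P₂ l) P₂ ∧ E = kl (tilt P₁ P₂ l) P₁}.Nonempty
    · by_cases hSb : {E | ∃ l ∈ Set.Icc (0:ℝ) 1,
          γ ≤ kl (tilt P₁ P₂ l) P₁ ∧ E = kl (tilt P₁ P₂ l) P₂}.Nonempty
      · -- both constraint sets nonempty: two-phase test
        have hlt1 : E₁ - δ/2 < E1exp P₁ P₂ γ := lt_of_lt_of_le (by linarith) hE1u
        obtain ⟨v1, hv1mem, hv1⟩ := exists_lt_of_lt_csSup hSa hlt1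
        obtain ⟨la, hla, hγa, hveq1⟩ := hv1mem
        rw [hveq1] at hv1
        have hlt2 : E₂ - δ/2 < E2exp P₁ P₂ γ := lt_of_lt_of_le (by linarith) hE2u
        obtain ⟨v2, hv2mem, hv2⟩ := exists_lt_of_lt_csSup hSb hlt2
        obtain ⟨lb, hlb, hγb, hveq2⟩ := hv2mem
        rw [hveq2] at hv2
        refine ⟨max 1 (⌈Real.log 2 / (δ/2)⌉₊ + 1), fun n hn => ?_⟩
        have hn1 : 1 ≤ n := le_trans (le_max_left _ _) hn
        have hδ2 : 0 < δ/2 := by linarith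
        have hlog : Real.log 2 ≤ (n : ℝ) * (δ/2) := by
          have hceil : Real.log 2 / (δ/2) ≤ (⌈Real.log 2 / (δ/2)⌉₊ : ℝ) := Nat.le_ceil _
          have hcn : ((⌈Real.log 2 / (δ/2)⌉₊ + 1 : ℕ) : ℝ) ≤ (n : ℝ) := by
            exact_mod_cast le_trans (le_max_right _ _) hn
          push_cast at hcn
          have hdn : Real.log 2 / (δ/2) ≤ (n : ℝ) := by linarith
          calc Real.log 2 = (Real.log 2 / (δ/2)) * (δ/2) := by field_simp
            _ ≤ (n : ℝ) * (δ/2) := mul_le_mul_of_nonneg_right hdn hδ2.le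
        refine ⟨(k+1)*n, by push_cast; rw [pow_one], ?_⟩
        obtain ⟨T, hp1, hp2, hA2, hA1⟩ :=
          twophase h1pos h2pos h1sum h2sum hla hlb k n hk1 hn1
        have hcastkn : ((k * n : ℕ) : ℝ) = (k : ℝ) * (n : ℝ) := by push_cast; ring
        have hklh1 : D ≤ kl (tilt P₁ P₂ (1/2)) P₁ := min_le_left _ _
        have hklh2 : D ≤ kl (tilt P₁ P₂ (1/2)) P₂ := min_le_right _ _
        have hk0 : (0:ℝ) ≤ (k : ℝ) := Nat.cast_nonneg k
        have hn0 : (0:ℝ) ≤ (n : ℝ) := Nat.cast_nonneg n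
        have hkk1 : (k : ℝ) * D ≤ (k : ℝ) * kl (tilt P₁ P₂ (1/2)) P₁ :=
          mul_le_mul_of_nonneg_left hklh1 hk0
        have hkk2 : (k : ℝ) * D ≤ (k : ℝ) * kl (tilt P₁ P₂ (1/2)) P₂ :=
          mul_le_mul_of_nonneg_left hklh2 hk0
        refine ⟨T, hp1.trans ?_, hp2.trans ?_, hA2.trans ?_, hA1.trans ?_⟩
        · apply Real.exp_le_exp.mpr
          rw [neg_le_neg_iff]
          calc γ * (n : ℝ) ≤ kl (tilt P₁ P₂ lb) P₁ * (n : ℝ) :=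
              mul_le_mul_of_nonneg_right hγb hn0
            _ = (n : ℝ) * kl (tilt P₁ P₂ lb) P₁ := mul_comm _ _
        · apply Real.exp_le_exp.mpr
          rw [neg_le_neg_iff]
          calc γ * (n : ℝ) ≤ kl (tilt P₁ P₂ la) P₂ * (n : ℝ) :=
              mul_le_mul_of_nonneg_right hγa hn0
            _ = (n : ℝ) * kl (tilt P₁ P₂ la) P₂ := mul_comm _ _
        · -- error of choosing H₂ under P₁
          refine two_exp_bound n hδ ?_ ?_ hlog
          · apply Real.exp_le_exp.mpr
            rw [neg_le_neg_iff]
            exact mul_le_mul_of_nonneg_left (by linarith) hn0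
          · apply Real.exp_le_exp.mpr
            rw [neg_le_neg_iff, hcastkn]
            have hgoal : (E₁ - δ/2) ≤ (k : ℝ) * kl (tilt P₁ P₂ (1/2)) P₁ := by linarith
            calc (n : ℝ) * (E₁ - δ/2) ≤ (n : ℝ) * ((k : ℝ) * kl (tilt P₁ P₂ (1/2)) P₁) :=
                mul_le_mul_of_nonneg_left hgoal hn0
              _ = (k : ℝ) * (n : ℝ) * kl (tilt P₁ P₂ (1/2)) P₁ := by ring
        · -- error of choosing H₁ under P₂
          refine two_exp_bound n hδ ?_ ?_ hlog
          · apply Real.exp_le_exp.mpr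
            rw [neg_le_neg_iff]
            exact mul_le_mul_of_nonneg_left (by linarith) hn0
          · apply Real.exp_le_exp.mpr
            rw [neg_le_neg_iff, hcastkn]
            have hgoal : (E₂ - δ/2) ≤ (k : ℝ) * kl (tilt P₁ P₂ (1/2)) P₂ := by linarith
            calc (n : ℝ) * (E₂ - δ/2) ≤ (n : ℝ) * ((k : ℝ) * kl (tilt P₁ P₂ (1/2)) P₂) :=
                mul_le_mul_of_nonneg_left hgoal hn0
              _ = (k : ℝ) * (n : ℝ) * kl (tilt P₁ P₂ (1/2)) P₂ := by ring
      · -- Sb empty: E₂ = 0, use a fixed-length test built from la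
        have hE2z : E₂ = 0 := by
          have he : E2exp P₁ P₂ γ = 0 := by
            have : E2exp P₁ P₂ γ = sSup {E | ∃ l ∈ Set.Icc (0:ℝ) 1,
                γ ≤ kl (tilt P₁ P₂ l) P₁ ∧ E = kl (tilt P₁ P₂ l) P₂} := rfl
            rw [this, Set.not_nonempty_iff_eq_empty.mp hSb, Real.sSup_empty]
          linarith [hE2u, hE20]
        have hlt1 : E₁ - δ/2 < E1exp P₁ P₂ γ := lt_of_lt_of_le (by linarith) hE1u
        obtain ⟨v1, hv1mem, hv1⟩ := exists_lt_of_lt_csSup hSa hlt1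
        obtain ⟨la, hla, hγa, hveq1⟩ := hv1mem
        rw [hveq1] at hv1
        refine ⟨1, fun n hn => ⟨n, ?_, ?_⟩⟩
        · rw [pow_one]; nlinarith [(Nat.cast_nonneg k : (0:ℝ) ≤ (k:ℝ)), (Nat.cast_nonneg n : (0:ℝ) ≤ (n:ℝ))]
        · have hkl2 : (0:ℝ) ≤ kl (tilt P₁ P₂ la) P₂ :=
            kl_nonneg' (tilt_pos h1pos h2pos la) h2pos (tilt_sum h1pos h2pos la) h2sum
          exact FL_achieve_step h1pos h2pos h1sum h2sum hla γ δ E₁ E₂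
            (by linarith) (by rw [hE2z]; linarith) n
    · -- Sa empty: E₁ = 0
      have hE1z : E₁ = 0 := by
        have he : E1exp P₁ P₂ γ = 0 := by
          have : E1exp P₁ P₂ γ = sSup {E | ∃ l ∈ Set.Icc (0:ℝ) 1,
              γ ≤ kl (tilt P₁ P₂ l) P₂ ∧ E = kl (tilt P₁ P₂ l) P₁} := rfl
          rw [this, Set.not_nonempty_iff_eq_empty.mp hSa, Real.sSup_empty]
        linarith [hE1u, hE10]
      by_cases hSb : {E | ∃ l ∈ Set.Icc (0:ℝ) 1,
          γ ≤ kl (tilt P₁ P₂ l) P₁ ∧ E = kl (tilt P₁ P₂ l) P₂}.Nonempty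
      · -- use fixed-length test from lb
        have hlt2 : E₂ - δ/2 < E2exp P₁ P₂ γ := lt_of_lt_of_le (by linarith) hE2u
        obtain ⟨v2, hv2mem, hv2⟩ := exists_lt_of_lt_csSup hSb hlt2
        obtain ⟨lb, hlb, hγb, hveq2⟩ := hv2mem
        rw [hveq2] at hv2
        refine ⟨1, fun n hn => ⟨n, ?_, ?_⟩⟩
        · rw [pow_one]; nlinarith [(Nat.cast_nonneg k : (0:ℝ) ≤ (k:ℝ)), (Nat.cast_nonneg n : (0:ℝ) ≤ (n:ℝ))]
        · have hkl1 : (0:ℝ) ≤ kl (tilt P₁ P₂ lb) P₁ :=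
            kl_nonneg' (tilt_pos h1pos h2pos lb) h1pos (tilt_sum h1pos h2pos lb) h1sum
          exact FL_achieve_step h1pos h2pos h1sum h2sum hlb γ δ E₁ E₂
            (by rw [hE1z]; linarith) (by linarith) n
      · -- both empty: E₁ = E₂ = 0
        have hE2z : E₂ = 0 := by
          have he : E2exp P₁ P₂ γ = 0 := by
            have : E2exp P₁ P₂ γ = sSup {E | ∃ l ∈ Set.Icc (0:ℝ) 1,
                γ ≤ kl (tilt P₁ P₂ l) P₁ ∧ E = kl (tilt P₁ P₂ l) P₂} := rfl
            rw [this, Set.not_nonempty_iff_eq_empty.mp hSb, Real.sSup_empty]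
          linarith [hE2u, hE20]
        refine ⟨1, fun n hn => ⟨n, ?_, ?_⟩⟩
        · rw [pow_one]; nlinarith [(Nat.cast_nonneg k : (0:ℝ) ≤ (k:ℝ)), (Nat.cast_nonneg n : (0:ℝ) ≤ (n:ℝ))]
        · exact FL_achieve_step h1pos h2pos h1sum h2sum hhalf γ δ E₁ E₂
            (by rw [hE1z]; linarith) (by rw [hE2z]; linarith) n
end

section
/- If γ > D*, then [0,E₁(γ)] × [0,E₂(γ)] ⊆ R_FD; equivalently, there exists λ ∈ [0,1] such that E₁(γ) ≤ D(P^(λ)‖P₁) and E₂(γ) ≤ D(P^(λ)‖P₂). -/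
open Real Filter Finset MeasureTheory
open scoped Classical

variable {𝒳 : Type*} [Fintype 𝒳] [DecidableEq 𝒳] [Nonempty 𝒳]

section Aux

lemma Zpos_aux (P₁ P₂ : 𝒳 → ℝ) (h1 : ∀ x, 0 < P₁ x) (h2 : ∀ x, 0 < P₂ x) (l : ℝ) :
    0 < ∑ a, P₁ a ^ (1 - l) * P₂ a ^ l :=
  Finset.sum_pos (fun a _ => mul_pos (Real.rpow_pos_of_pos (h1 a) _)
    (Real.rpow_pos_of_pos (h2 a) _)) Finset.univ_nonempty

lemma tilt_pos_aux (P₁ P₂ : 𝒳 → ℝ) (h1 : ∀ x, 0 < P₁ x) (h2 : ∀ x, 0 < P₂ x) (l : ℝ)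
    (x : 𝒳) : 0 < tilt P₁ P₂ l x :=
  div_pos (mul_pos (Real.rpow_pos_of_pos (h1 x) _) (Real.rpow_pos_of_pos (h2 x) _))
    (Zpos_aux P₁ P₂ h1 h2 l)

lemma tilt_sum_aux (P₁ P₂ : 𝒳 → ℝ) (h1 : ∀ x, 0 < P₁ x) (h2 : ∀ x, 0 < P₂ x) (l : ℝ) :
    ∑ x, tilt P₁ P₂ l x = 1 := by
  unfold tilt
  rw [← Finset.sum_div]
  exact div_self (Zpos_aux P₁ P₂ h1 h2 l).ne'

lemma kl_nonneg_aux (Q P : 𝒳 → ℝ) (hQ : ∀ x, 0 < Q x) (hP : ∀ x, 0 < P x)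
    (hQs : ∑ x, Q x = 1) (hPs : ∑ x, P x = 1) : 0 ≤ kl Q P := by
  have h : ∀ x ∈ Finset.univ, Q x - P x ≤ Q x * Real.log (Q x / P x) := by
    intro x _
    have hlog : Real.log (P x / Q x) ≤ P x / Q x - 1 :=
      Real.log_le_sub_one_of_pos (div_pos (hP x) (hQ x))
    have hrev : Real.log (Q x / P x) = - Real.log (P x / Q x) := by
      rw [← Real.log_inv, inv_div]
    have h2 : Q x * Real.log (P x / Q x) ≤ Q x * (P x / Q x - 1) :=
      mul_le_mul_of_nonneg_left hlog (hQ x).le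
    have h3 : Q x * (P x / Q x - 1) = P x - Q x := by
      rw [mul_sub, mul_div_cancel₀ _ (hQ x).ne', mul_one]
    rw [hrev]
    nlinarith [h2, h3]
  have := Finset.sum_le_sum h
  rw [Finset.sum_sub_distrib, hQs, hPs] at this
  unfold kl
  linarith

lemma kl_self_aux (Q : 𝒳 → ℝ) (hQ : ∀ x, 0 < Q x) : kl Q Q = 0 := by
  unfold kl
  refine Finset.sum_eq_zero fun x _ => ?_
  rw [div_self (hQ x).ne', Real.log_one, mul_zero]

lemma combo_aux (P₁ P₂ Q : 𝒳 → ℝ) (h1 : ∀ x, 0 < P₁ x) (h2 : ∀ x, 0 < P₂ x)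
    (hQ : ∀ x, 0 < Q x) (hQs : ∑ x, Q x = 1) (l : ℝ) :
    kl Q (tilt P₁ P₂ l)
      = (1 - l) * kl Q P₁ + l * kl Q P₂ + Real.log (∑ a, P₁ a ^ (1 - l) * P₂ a ^ l) := by
  have hZ := Zpos_aux P₁ P₂ h1 h2 l
  set Z := ∑ a, P₁ a ^ (1 - l) * P₂ a ^ l with hZdef
  have key : ∀ x, Q x * Real.log (Q x / tilt P₁ P₂ l x)
      = (1 - l) * (Q x * Real.log (Q x / P₁ x)) + l * (Q x * Real.log (Q x / P₂ x))
        + Q x * Real.log Z := by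
    intro x
    have hW1 : (0:ℝ) < P₁ x ^ (1 - l) := Real.rpow_pos_of_pos (h1 x) _
    have hW2 : (0:ℝ) < P₂ x ^ l := Real.rpow_pos_of_pos (h2 x) _
    have e1 : Real.log (Q x / tilt P₁ P₂ l x)
        = Real.log (Q x) - ((1 - l) * Real.log (P₁ x) + l * Real.log (P₂ x))
          + Real.log Z := by
      show Real.log (Q x / (P₁ x ^ (1 - l) * P₂ x ^ l / Z)) = _
      rw [div_div_eq_mul_div, Real.log_div (mul_pos (hQ x) hZ).ne' (mul_pos hW1 hW2).ne',
        Real.log_mul (hQ x).ne' hZ.ne', Real.log_mul hW1.ne' hW2.ne',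
        Real.log_rpow (h1 x), Real.log_rpow (h2 x)]
      ring
    rw [e1, Real.log_div (hQ x).ne' (h1 x).ne', Real.log_div (hQ x).ne' (h2 x).ne']
    ring
  unfold kl
  rw [Finset.sum_congr rfl (fun x _ => key x)]
  rw [Finset.sum_add_distrib, Finset.sum_add_distrib, ← Finset.mul_sum, ← Finset.mul_sum,
    ← Finset.sum_mul, hQs, one_mul]

lemma combo_le_aux (P₁ P₂ : 𝒳 → ℝ) (h1 : ∀ x, 0 < P₁ x) (h2 : ∀ x, 0 < P₂ x)
    (l μ : ℝ) :
    (1 - μ) * kl (tilt P₁ P₂ μ) P₁ + μ * kl (tilt P₁ P₂ μ) P₂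
      ≤ (1 - μ) * kl (tilt P₁ P₂ l) P₁ + μ * kl (tilt P₁ P₂ l) P₂ := by
  have hμpos := tilt_pos_aux P₁ P₂ h1 h2 μ
  have hlpos := tilt_pos_aux P₁ P₂ h1 h2 l
  have hμsum := tilt_sum_aux P₁ P₂ h1 h2 μ
  have hlsum := tilt_sum_aux P₁ P₂ h1 h2 l
  have e1 := combo_aux P₁ P₂ (tilt P₁ P₂ μ) h1 h2 hμpos hμsum μ
  have e2 := combo_aux P₁ P₂ (tilt P₁ P₂ l) h1 h2 hlpos hlsum μ
  rw [kl_self_aux _ hμpos] at e1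
  have hnn : 0 ≤ kl (tilt P₁ P₂ l) (tilt P₁ P₂ μ) :=
    kl_nonneg_aux _ _ hlpos (tilt_pos_aux P₁ P₂ h1 h2 μ) hlsum hμsum
  linarith

end Aux

/-- If `γ > D*` then `[0,E₁(γ)] × [0,E₂(γ)] ⊆ R_FD`. -/
theorem box_subset_RFD_of_gamma_gt_chernoff (P₁ P₂ : 𝒳 → ℝ)
    (h1pos : ∀ x, 0 < P₁ x) (h2pos : ∀ x, 0 < P₂ x)
    (h1sum : ∑ x, P₁ x = 1) (h2sum : ∑ x, P₂ x = 1)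
    (hne : P₁ ≠ P₂)
    (ls : ℝ) (hls : ls ∈ Set.Icc (0:ℝ) 1)
    (hchern : kl (tilt P₁ P₂ ls) P₁ = kl (tilt P₁ P₂ ls) P₂)
    (γ : ℝ) (hγ : kl (tilt P₁ P₂ ls) P₁ < γ) :
    Set.Icc 0 (E1exp P₁ P₂ γ) ×ˢ Set.Icc 0 (E2exp P₁ P₂ γ) ⊆ RFD P₁ P₂ := by
  intro p hp
  have h1s := tilt_sum_aux P₁ P₂ h1pos h2pos ls
  have h1p := tilt_pos_aux P₁ P₂ h1pos h2pos ls
  set D := kl (tilt P₁ P₂ ls) P₁ with hDdef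
  have hD0 : 0 ≤ D := kl_nonneg_aux _ _ h1p h1pos h1s h1sum
  have hE1 : E1exp P₁ P₂ γ ≤ D := by
    refine Real.sSup_le ?_ hD0
    rintro E ⟨μ, hμ, hγμ, rfl⟩
    have h := combo_le_aux P₁ P₂ h1pos h2pos ls μ
    rw [← hDdef, ← hchern] at h
    rcases lt_or_ge μ 1 with hμ1 | hμ1
    · have h2 : μ * γ ≤ μ * kl (tilt P₁ P₂ μ) P₂ := mul_le_mul_of_nonneg_left hγμ hμ.1
      have h2' : μ * D ≤ μ * γ := mul_le_mul_of_nonneg_left hγ.le hμ.1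
      have h3 : (1 - μ) * kl (tilt P₁ P₂ μ) P₁ ≤ (1 - μ) * D := by linarith
      exact (mul_le_mul_iff_right₀ (by linarith : (0:ℝ) < 1 - μ)).mp h3
    · have hμe : μ = 1 := le_antisymm hμ.2 hμ1
      subst hμe
      linarith
  have hE2 : E2exp P₁ P₂ γ ≤ kl (tilt P₁ P₂ ls) P₂ := by
    rw [← hchern]
    refine Real.sSup_le ?_ hD0
    rintro E ⟨μ, hμ, hγμ, rfl⟩
    have h := combo_le_aux P₁ P₂ h1pos h2pos ls μ
    rw [← hDdef, ← hchern] at h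
    rcases lt_or_ge 0 μ with hμ0 | hμ0
    · have h2 : (1 - μ) * γ ≤ (1 - μ) * kl (tilt P₁ P₂ μ) P₁ :=
        mul_le_mul_of_nonneg_left hγμ (by linarith [hμ.2])
      have h2' : (1 - μ) * D ≤ (1 - μ) * γ :=
        mul_le_mul_of_nonneg_left hγ.le (by linarith [hμ.2])
      have h3 : μ * kl (tilt P₁ P₂ μ) P₂ ≤ μ * D := by linarith
      exact (mul_le_mul_iff_right₀ hμ0).mp h3
    · have hμe : μ = 0 := le_antisymm hμ0 hμ.1
      subst hμe
      linarith
  exact ⟨hp.1.1, hp.2.1, ls, hls, le_trans hp.1.2 hE1, le_trans hp.2.2 hE2⟩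
end
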